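/- The logarithmic dilation satisfies δ_b(f) = ξ⁻¹(ξ(f) ⊕' ξ(b)), where ⊕' is the usual functional dilation (f ⊕' b)(x) = sup_h (f(x-h) + b(h)) and ξ is applied pointwise. -/
import Mathlib


noncomputable def lipAdd (M f g : ℝ) : ℝ := f + g - f * g / M

noncomputable def xi (M f : ℝ) : ℝ := -M * Real.log (1 - f / M)

noncomputable def xiInv (M f : ℝ) : ℝ := M * (1 - Real.exp (-f / M))

/-- Logarithmic dilation: `δ_b(f)(x) = sup_h (f(x-h) ⊕ b(h))`. -/
noncomputable def logDil (M : ℝ) {D : Type*} [Fintype D] [AddGroup D] [Nonempty D]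
    (b f : D → ℝ) (x : D) : ℝ :=
  Finset.univ.sup' Finset.univ_nonempty (fun h => lipAdd M (f (x - h)) (b h))

/-- Usual functional dilation: `(f ⊕' b)(x) = sup_h (f(x-h) + b(h))`. -/
noncomputable def dil {D : Type*} [Fintype D] [AddGroup D] [Nonempty D]
    (b f : D → ℝ) (x : D) : ℝ :=
  Finset.univ.sup' Finset.univ_nonempty (fun h => f (x - h) + b h)

lemma xiInv_mono (M : ℝ) (hM : 0 < M) : Monotone (xiInv M) := by
  intro a b hab
  unfold xiInv
  have h : Real.exp (-b / M) ≤ Real.exp (-a / M) := by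
    apply Real.exp_le_exp.mpr
    gcongr
  nlinarith

lemma xiInv_xi_add (M : ℝ) (hM : 0 < M) (a c : ℝ) (ha : a < M) (hc : c < M) :
    xiInv M (xi M a + xi M c) = lipAdd M a c := by
  have hM' : M ≠ 0 := ne_of_gt hM
  have hA : 0 < 1 - a / M := by
    have : a / M < 1 := (div_lt_one hM).mpr ha
    linarith
  have hC : 0 < 1 - c / M := by
    have : c / M < 1 := (div_lt_one hM).mpr hc
    linarith
  unfold xiInv xi lipAdd
  have harg : -(-M * Real.log (1 - a / M) + -M * Real.log (1 - c / M)) / M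
      = Real.log (1 - a / M) + Real.log (1 - c / M) := by
    field_simp; ring
  rw [harg, Real.exp_add, Real.exp_log hA, Real.exp_log hC]
  field_simp
  ring

/-- `δ_b(f) = ξ⁻¹(ξ(f) ⊕' ξ(b))`, with `ξ` applied pointwise. -/
theorem logDil_eq (M : ℝ) (hM : 0 < M) {D : Type*} [Fintype D] [AddGroup D]
    [Nonempty D] (b f : D → ℝ) (hb : ∀ x, b x < M) (hf : ∀ x, f x < M) :
    ∀ x, logDil M b f x = xiInv M (dil (fun h => xi M (b h)) (fun h => xi M (f h)) x) := by
  intro x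
  unfold logDil dil
  rw [Finset.comp_sup'_eq_sup'_comp Finset.univ_nonempty (xiInv M)
    (fun a c => (xiInv_mono M hM).map_max)]
  apply Finset.sup'_congr _ rfl
  intro h _
  exact (xiInv_xi_add M hM (f (x - h)) (b h) (hf _) (hb _)).symm
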